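/- Let $b \geq 2$ be an integer and let $c \approx 1.764$ be the unique positive real root of $c = e^{1/c}$. Define $g(b) = \frac{b}{cb+1}\left(1 - \frac{1}{(c-1)b+1}\right)^{-b + b^2/(cb+1)}$. Then $g(b) < 1$. -/

import Mathlib

/-- Lower bound for log: `1 - 1/x ≤ log x` for `x > 0`. -/
lemma aux_log_ge (x : ℝ) (hx : 0 < x) : 1 - 1/x ≤ Real.log x := by
  have h := Real.log_le_sub_one_of_pos (show (0:ℝ) < x⁻¹ by positivity)
  rw [Real.log_inv] at h
  have : x⁻¹ = 1/x := by ring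
  linarith [h, this ▸ h]

theorem stmt_11 (c : ℝ) (hc0 : 0 < c) (hc : c = Real.exp (1 / c))
    (b : ℕ) (hb : 2 ≤ b) :
    ((b : ℝ) / (c * b + 1)) *
      (1 - 1 / ((c - 1) * b + 1)) ^ (-(b : ℝ) + (b : ℝ) ^ 2 / (c * b + 1)) < 1 := by
  have hc1 : 1 < c := by
    have h := Real.add_one_le_exp (1/c)
    rw [← hc] at h
    have : 0 < 1/c := by positivity
    linarith
  have hlogc : Real.log c = 1/c := by conv_lhs => rw [hc, Real.log_exp]
  -- key numeric fact : c^2 > c + 1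
  have hkey : c + 1 < c^2 := by
    by_contra h
    push_neg at h
    have hle : c ≤ 1.62 := by nlinarith
    have h1 : (1:ℝ)/1.62 ≤ 1/c := by
      apply one_div_le_one_div_of_le hc0 hle
    have h2 : Real.exp ((1:ℝ)/1.62) ≤ Real.exp (1/c) := Real.exp_le_exp.mpr h1
    have h3 : Real.exp ((1:ℝ)/1.62) = Real.exp ((1:ℝ)/3.24) * Real.exp ((1:ℝ)/3.24) := by
      rw [← Real.exp_add]; norm_num
    have h4 : (1:ℝ) + 1/3.24 ≤ Real.exp ((1:ℝ)/3.24) := by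
      have := Real.add_one_le_exp ((1:ℝ)/3.24); linarith
    have h5 : ((1:ℝ) + 1/3.24) * ((1:ℝ) + 1/3.24) ≤ Real.exp ((1:ℝ)/1.62) := by
      rw [h3]
      have h0 : (0:ℝ) ≤ 1 + 1/3.24 := by norm_num
      exact mul_le_mul h4 h4 h0 (le_of_lt (Real.exp_pos _))
    rw [← hc] at h2
    nlinarith
  have hB : (2:ℝ) ≤ (b:ℝ) := by exact_mod_cast hb
  set B : ℝ := (b:ℝ) with hBdef
  have hB0 : 0 < B := by linarith
  have hq0 : 0 < c*B + 1 := by nlinarith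
  have hd1 : 1 < (c-1)*B + 1 := by nlinarith
  have hd0 : 0 < (c-1)*B + 1 := by linarith
  set q : ℝ := c*B + 1 with hqdef
  set d : ℝ := (c-1)*B + 1 with hddef
  have hbase0 : 0 < 1 - 1/d := by
    have : 1/d < 1 := by rw [div_lt_one hd0]; linarith
    linarith
  have hBq0 : 0 < B/q := div_pos hB0 hq0
  rw [Real.rpow_def_of_pos hbase0, ← Real.exp_log hBq0, ← Real.exp_add]
  have hlogBq : Real.log (B/q) = Real.log B - Real.log q :=
    Real.log_div (ne_of_gt hB0) (ne_of_gt hq0)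
  -- bound log (1-1/d) from below
  have hlb : -(1/(d-1)) ≤ Real.log (1 - 1/d) := by
    have h := aux_log_ge (1 - 1/d) hbase0
    have hdm : d - 1 ≠ 0 := by intro h'; rw [hddef] at h'; nlinarith
    have heq : 1 - 1/(1 - 1/d) = -(1/(d-1)) := by
      field_simp
      ring
    linarith [heq ▸ h]
  -- exponent is negative
  have hE : -B + B^2/q = -(B*d)/q := by
    field_simp
    ring
  have hEneg : -B + B^2/q < 0 := by
    rw [hE]
    apply div_neg_of_neg_of_pos _ hq0
    have : 0 < B*d := by positivity
    linarith
  -- bound log q - log B from below : ≥ 1/c + 1/q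
  have hlogq : 1/c + 1/q ≤ Real.log q - Real.log B := by
    have hcb0 : 0 < c*B := by positivity
    have h1 : Real.log (q/(c*B)) = Real.log q - Real.log c - Real.log B := by
      rw [Real.log_div (ne_of_gt hq0) (ne_of_gt hcb0),
        Real.log_mul (ne_of_gt hc0) (ne_of_gt hB0)]
      ring
    have h2 := aux_log_ge (q/(c*B)) (div_pos hq0 hcb0)
    have h3 : 1 - 1/(q/(c*B)) = 1/q := by
      rw [one_div_div, hqdef]
      field_simp
      ring
    rw [h3, h1] at h2
    rw [hlogc] at h2
    linarith
  -- bound the product term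
  have hprod : Real.log (1 - 1/d) * (-B + B^2/q) ≤ (-(1/(d-1))) * (-B + B^2/q) :=
    mul_le_mul_of_nonpos_right hlb (le_of_lt hEneg)
  have hd1' : 0 < d - 1 := by linarith
  have hprod2 : (-(1/(d-1))) * (-B + B^2/q) = d/((c-1)*q) := by
    rw [hE]
    have hc1' : (0:ℝ) < c - 1 := by linarith
    have hdm1 : d - 1 = (c-1)*B := by rw [hddef]; ring
    rw [hdm1]
    field_simp
  -- final algebraic inequality
  have hfinal : d/((c-1)*q) < 1/c + 1/q := by
    have hcq : 0 < (c-1)*q := mul_pos (by linarith) hq0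
    rw [div_add_div _ _ (ne_of_gt hc0) (ne_of_gt hq0), div_lt_div_iff₀ hcq (by positivity)]
    have : (q + c) * ((c-1)*q) - d * (c*q) = (c^2 - c - 1) * q := by
      rw [hqdef, hddef]; ring
    nlinarith [hq0, hkey]
  have hsum : Real.log (B/q) + Real.log (1 - 1/d) * (-B + B^2/q) < 0 := by
    rw [hlogBq]
    have := hprod2 ▸ hprod
    linarith
  calc Real.exp (Real.log (B/q) + Real.log (1 - 1/d) * (-B + B^2/q))
      < Real.exp 0 := Real.exp_lt_exp.mpr hsum
    _ = 1 := Real.exp_zero
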